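/- Let C ⊆ ℝ^n be a rational polyhedral cone and let C_ℚ = C ∩ ℚ^n. Let g : C_ℚ → ℚ be a superadditive map which satisfies g(λx) = λg(x) for all x ∈ C_ℚ and all rational λ ≥ 0. Then g extends in a unique way to a superlinear function on C; that is, there is a unique superlinear function ĝ : C → ℝ with ĝ(x) = g(x) for all x ∈ C_ℚ. -/

import Mathlib

theorem aux_density : ∀ (k n : ℕ) (v : Fin k → Fin n → ℚ) (w : Fin n → ℚ)
    (x : Fin k → ℝ), (∀ j, (w j : ℝ) = ∑ i, x i * (v i j : ℝ)) →
    ∀ ε : ℝ, 0 < ε →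
    ∃ d : Fin k → ℚ, (∀ j, w j = ∑ i, d i * v i j) ∧ ∀ i, |x i - (d i : ℝ)| < ε := by
  intro k
  induction k with
  | zero =>
    intro n v w x hx ε hε
    refine ⟨fun i => 0, fun j => ?_, fun i => i.elim0⟩
    have := hx j
    simp only [Finset.univ_eq_empty, Finset.sum_empty] at this ⊢
    exact_mod_cast this
  | succ k ih =>
    intro n v w x hx ε hε
    by_cases hv : ∀ i j, v i j = 0
    · -- all coefficients vanish
      have hw : ∀ j, w j = 0 := by
        intro j
        have := hx j
        simp only [hv, Rat.cast_zero, mul_zero, Finset.sum_const_zero] at this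
        exact_mod_cast this
      have hchoice : ∀ i : Fin (k+1), ∃ q : ℚ, x i - ε < (q:ℝ) ∧ (q:ℝ) < x i :=
        fun i => exists_rat_btwn (by linarith)
      choose d hd1 hd2 using hchoice
      refine ⟨d, fun j => ?_, fun i => ?_⟩
      · simp [hv, hw]
      · rw [abs_lt]; constructor <;> [linarith [hd2 i]; linarith [hd1 i]]
    · push_neg at hv
      obtain ⟨i₀, j₀, hc⟩ := hv
      set c : ℚ := v i₀ j₀ with hcdef
      have hcR : ((c:ℝ)) ≠ 0 := by exact_mod_cast hc
      set sA : Fin k → Fin (k+1) := i₀.succAbove with hsA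
      set V : ℝ := ∑ i, |(v (sA i) j₀ : ℝ)| with hVdef
      have hV : 0 ≤ V := Finset.sum_nonneg fun i _ => abs_nonneg _
      have hcpos : 0 < |(c:ℝ)| := abs_pos.mpr hcR
      set ε' : ℝ := min ε (ε * |(c:ℝ)| / (V+1)) with hε'def
      have hε' : 0 < ε' := lt_min hε (by positivity)
      -- reduced system
      set v' : Fin k → Fin n → ℚ := fun i j => v (sA i) j - v (sA i) j₀ / c * v i₀ j with hv'def
      set w' : Fin n → ℚ := fun j => w j - w j₀ / c * v i₀ j with hw'def
      have hsum : ∀ j, ∑ i, x (sA i) * (v (sA i) j : ℝ) = (w j : ℝ) - x i₀ * (v i₀ j : ℝ) := by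
        intro j
        have := hx j
        rw [Fin.sum_univ_succAbove (fun i => x i * (v i j : ℝ)) i₀] at this
        linarith
      have hx' : ∀ j, (w' j : ℝ) = ∑ i, x (sA i) * (v' i j : ℝ) := by
        intro j
        have expand : ∑ i, x (sA i) * ((v' i j : ℚ) : ℝ)
            = (∑ i, x (sA i) * (v (sA i) j : ℝ))
              - (∑ i, x (sA i) * (v (sA i) j₀ : ℝ)) * ((v i₀ j : ℝ) / (c:ℝ)) := by
          rw [Finset.sum_mul, ← Finset.sum_sub_distrib]
          refine Finset.sum_congr rfl fun i _ => ?_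
          push_cast [hv'def]
          ring
        rw [expand, hsum j, hsum j₀]
        push_cast [hw'def]
        field_simp
        ring
      obtain ⟨d', hd'eq, hd'close⟩ := ih n v' w' (fun i => x (sA i)) hx' ε' hε'
      set t : ℚ := (w j₀ - ∑ i, d' i * v (sA i) j₀) / c with htdef
      set d : Fin (k+1) → ℚ := i₀.insertNth t d' with hddef
      refine ⟨d, fun j => ?_, fun i => ?_⟩
      · rw [Fin.sum_univ_succAbove (fun i => d i * v i j) i₀]
        simp only [hddef, Fin.insertNth_apply_same, Fin.insertNth_apply_succAbove]
        have hexp : ∑ i, d' i * v' i j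
            = (∑ i, d' i * v (sA i) j) - (∑ i, d' i * v (sA i) j₀) * (v i₀ j / c) := by
          rw [Finset.sum_mul, ← Finset.sum_sub_distrib]
          refine Finset.sum_congr rfl fun i _ => ?_
          simp only [hv'def]
          ring
        have h2 := hd'eq j
        rw [hexp] at h2
        simp only [hw'def] at h2
        rw [htdef]
        field_simp at h2 ⊢
        linarith [h2]
      · by_cases h : i = i₀
        · rw [h]
          simp only [hddef, Fin.insertNth_apply_same]
          have hSd : |∑ i, ((d' i : ℝ) - x (sA i)) * (v (sA i) j₀ : ℝ)| ≤ ε' * V := by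
            calc |∑ i, ((d' i : ℝ) - x (sA i)) * (v (sA i) j₀ : ℝ)|
                ≤ ∑ i, |((d' i : ℝ) - x (sA i)) * (v (sA i) j₀ : ℝ)| :=
                  Finset.abs_sum_le_sum_abs _ _
              _ ≤ ∑ i, ε' * |(v (sA i) j₀ : ℝ)| := by
                  refine Finset.sum_le_sum fun i _ => ?_
                  rw [abs_mul]
                  refine mul_le_mul_of_nonneg_right ?_ (abs_nonneg _)
                  rw [abs_sub_comm]
                  exact (hd'close i).le
              _ = ε' * V := by rw [hVdef, Finset.mul_sum]
          have hxt : x i₀ - (t:ℝ) = (∑ i, ((d' i : ℝ) - x (sA i)) * (v (sA i) j₀ : ℝ)) / (c:ℝ) := by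
            have h0 := hsum j₀
            have ht : (t:ℝ) = ((w j₀ : ℝ) - ∑ i, (d' i : ℝ) * (v (sA i) j₀ : ℝ)) / (c:ℝ) := by
              rw [htdef]; push_cast; ring
            have hsplit : (∑ i, ((d' i : ℝ) - x (sA i)) * (v (sA i) j₀ : ℝ))
                = (∑ i, (d' i : ℝ) * (v (sA i) j₀ : ℝ))
                  - ∑ i, x (sA i) * (v (sA i) j₀ : ℝ) := by
              rw [← Finset.sum_sub_distrib]
              exact Finset.sum_congr rfl fun i _ => by ring
            rw [ht, hsplit, h0]
            field_simp
            ring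
          rw [hxt, abs_div]
          rw [div_lt_iff₀ hcpos]
          have h3 : ε' * (V + 1) ≤ ε * |(c:ℝ)| := by
            have : ε' ≤ ε * |(c:ℝ)| / (V+1) := min_le_right _ _
            rw [le_div_iff₀ (by linarith)] at this
            exact this
          calc |∑ i, ((d' i : ℝ) - x (sA i)) * (v (sA i) j₀ : ℝ)| ≤ ε' * V := hSd
            _ < ε' * (V + 1) := by nlinarith
            _ ≤ ε * |(c:ℝ)| := h3
        · obtain ⟨i', rfl⟩ := Fin.exists_succAbove_eq h
          simp only [hddef, Fin.insertNth_apply_succAbove]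
          exact lt_of_lt_of_le (hd'close i') (min_le_left _ _)

namespace SuperExt

/-- The set of lower approximations. -/
def Sset {n k : ℕ} (v : Fin k → Fin n → ℚ) (C : Set (Fin n → ℝ)) (g : (Fin n → ℚ) → ℚ)
    (x : Fin n → ℝ) : Set ℝ :=
  {α | ∃ q : Fin n → ℚ, ∃ c : Fin k → ℝ, (fun j => ((q j : ℝ))) ∈ C ∧ (∀ i, 0 ≤ c i) ∧
    (∀ j, x j = (q j : ℝ) + ∑ i, c i * (v i j : ℝ)) ∧
    α = (g q : ℝ) + ∑ i, c i * ((g (v i) : ℚ) : ℝ)}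

theorem mem_iff {n k : ℕ} (v : Fin k → Fin n → ℚ) (C : Set (Fin n → ℝ))
    (hC : C = {x | ∃ c : Fin k → ℝ, (∀ i, 0 ≤ c i) ∧
      x = ∑ i, c i • fun j => ((v i j : ℝ))}) (x : Fin n → ℝ) :
    x ∈ C ↔ ∃ c : Fin k → ℝ, (∀ i, 0 ≤ c i) ∧ ∀ j, x j = ∑ i, c i * (v i j : ℝ) := by
  subst hC
  constructor
  · rintro ⟨c, hc, rfl⟩
    exact ⟨c, hc, fun j => by simp [Finset.sum_apply]⟩
  · rintro ⟨c, hc, hx⟩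
    refine ⟨c, hc, funext fun j => ?_⟩
    simpa [Finset.sum_apply] using hx j

theorem mem_rat {n k : ℕ} (v : Fin k → Fin n → ℚ) (C : Set (Fin n → ℝ))
    (hC : C = {x | ∃ c : Fin k → ℝ, (∀ i, 0 ≤ c i) ∧
      x = ∑ i, c i • fun j => ((v i j : ℝ))})
    (r : Fin k → ℚ) (hr : ∀ i, 0 ≤ r i) :
    (fun j => (((fun j' => ∑ i, r i * v i j') j : ℚ) : ℝ)) ∈ C := by
  rw [mem_iff v C hC]
  refine ⟨fun i => (r i : ℝ), fun i => ?_, fun j => by push_cast; rfl⟩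
  · dsimp only
    exact_mod_cast hr i

theorem mem_gen {n k : ℕ} (v : Fin k → Fin n → ℚ) (C : Set (Fin n → ℝ))
    (hC : C = {x | ∃ c : Fin k → ℝ, (∀ i, 0 ≤ c i) ∧
      x = ∑ i, c i • fun j => ((v i j : ℝ))}) (a : Fin k) :
    (fun j => ((v a j : ℝ))) ∈ C := by
  rw [mem_iff v C hC]
  refine ⟨fun i => if i = a then 1 else 0, fun i => by positivity, fun j => ?_⟩
  rw [Finset.sum_eq_single a (fun b _ hb => by simp [hb]) (by simp)]
  simp

theorem mem_zero {n k : ℕ} (v : Fin k → Fin n → ℚ) (C : Set (Fin n → ℝ))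
    (hC : C = {x | ∃ c : Fin k → ℝ, (∀ i, 0 ≤ c i) ∧
      x = ∑ i, c i • fun j => ((v i j : ℝ))}) :
    (fun j => (((0 : Fin n → ℚ) j : ℝ))) ∈ C := by
  rw [mem_iff v C hC]
  exact ⟨0, fun i => le_rfl, fun j => by simp⟩

theorem mem_combo {n k : ℕ} (v : Fin k → Fin n → ℚ) (C : Set (Fin n → ℝ))
    (hC : C = {x | ∃ c : Fin k → ℝ, (∀ i, 0 ≤ c i) ∧
      x = ∑ i, c i • fun j => ((v i j : ℝ))})
    (x : Fin n → ℝ) (hx : x ∈ C) (c : Fin k → ℝ) (hc : ∀ i, 0 ≤ c i) :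
    (fun j => x j + ∑ i, c i * (v i j : ℝ)) ∈ C := by
  rw [mem_iff v C hC] at hx ⊢
  obtain ⟨e, he, hxe⟩ := hx
  refine ⟨fun i => e i + c i, fun i => add_nonneg (he i) (hc i), fun j => ?_⟩
  rw [hxe j, ← Finset.sum_add_distrib]
  exact Finset.sum_congr rfl fun i _ => by ring

theorem g_zero {n k : ℕ} (v : Fin k → Fin n → ℚ) (C : Set (Fin n → ℝ))
    (hC : C = {x | ∃ c : Fin k → ℝ, (∀ i, 0 ≤ c i) ∧
      x = ∑ i, c i • fun j => ((v i j : ℝ))})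
    (g : (Fin n → ℚ) → ℚ)
    (hhom : ∀ x : Fin n → ℚ, (fun j => ((x j : ℝ))) ∈ C →
      ∀ l : ℚ, 0 ≤ l → g (l • x) = l * g x) :
    g 0 = 0 := by
  have h0 := hhom 0 (mem_zero v C hC) 0 le_rfl
  simpa using h0

/-- iterated superadditivity over rational coefficients, for `g`. -/
theorem gsum {n k : ℕ} (v : Fin k → Fin n → ℚ) (C : Set (Fin n → ℝ))
    (hC : C = {x | ∃ c : Fin k → ℝ, (∀ i, 0 ≤ c i) ∧
      x = ∑ i, c i • fun j => ((v i j : ℝ))})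
    (g : (Fin n → ℚ) → ℚ)
    (hsuper : ∀ x y : Fin n → ℚ,
      (fun j => ((x j : ℝ))) ∈ C → (fun j => ((y j : ℝ))) ∈ C →
      g x + g y ≤ g (x + y))
    (hhom : ∀ x : Fin n → ℚ, (fun j => ((x j : ℝ))) ∈ C →
      ∀ l : ℚ, 0 ≤ l → g (l • x) = l * g x)
    (q : Fin n → ℚ) (hq : (fun j => ((q j : ℝ))) ∈ C)
    (r : Fin k → ℚ) (hr : ∀ i, 0 ≤ r i) :
    g q + ∑ i, r i * g (v i) ≤ g (fun j => q j + ∑ i, r i * v i j) := by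
  have memS : ∀ s : Finset (Fin k),
      (fun j => (((fun j' => q j' + ∑ i ∈ s, r i * v i j') j : ℚ) : ℝ)) ∈ C := by
    intro s
    have := mem_combo v C hC _ hq (fun i => if i ∈ s then (r i : ℝ) else 0)
      (fun i => by (try dsimp only); split <;> [exact_mod_cast hr i; rfl])
    convert this using 2 with j
    push_cast
    congr 1
    rw [← Finset.sum_subset (Finset.subset_univ s) (fun i _ hi => by simp [hi])]
    exact Finset.sum_congr rfl fun i hi => by simp [hi]
  have main : ∀ s : Finset (Fin k),
      g q + ∑ i ∈ s, r i * g (v i) ≤ g (fun j => q j + ∑ i ∈ s, r i * v i j) := by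
    intro s
    induction s using Finset.induction_on with
    | empty => simp
    | @insert a s ha ih =>
      have hmem1 := memS s
      have hmem2 : (fun j => (((r a • v a) j : ℚ) : ℝ)) ∈ C := by
        rw [mem_iff v C hC]
        refine ⟨fun i => if i = a then (r a : ℝ) else 0,
          fun i => by dsimp only; split <;> [exact_mod_cast hr a; rfl], fun j => ?_⟩
        rw [Finset.sum_eq_single a (fun b _ hb => by simp [hb]) (by simp)]
        simp [Pi.smul_apply]
      have hkey := hsuper _ _ hmem1 hmem2
      have hhom2 : g (r a • v a) = r a * g (v a) :=
        hhom (v a) (mem_gen v C hC a) (r a) (hr a)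
      have heq : (fun j => q j + ∑ i ∈ s, r i * v i j) + r a • v a
          = fun j => q j + ∑ i ∈ insert a s, r i * v i j := by
        funext j
        simp only [Pi.add_apply, Pi.smul_apply, smul_eq_mul, Finset.sum_insert ha]
        ring
      rw [heq, hhom2] at hkey
      rw [Finset.sum_insert ha]
      linarith
  exact main Finset.univ

/-- iterated superlinearity, for any candidate extension `G'`. -/
theorem Gsum {n k : ℕ} (v : Fin k → Fin n → ℚ) (C : Set (Fin n → ℝ))
    (hC : C = {x | ∃ c : Fin k → ℝ, (∀ i, 0 ≤ c i) ∧
      x = ∑ i, c i • fun j => ((v i j : ℝ))})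
    (g : (Fin n → ℚ) → ℚ) (G' : (Fin n → ℝ) → ℝ)
    (hG1 : ∀ x ∈ C, ∀ y ∈ C, ∀ a b : ℝ, 0 ≤ a → 0 ≤ b →
      a * G' x + b * G' y ≤ G' (a • x + b • y))
    (hG2 : ∀ x : Fin n → ℚ, (fun j => ((x j : ℝ))) ∈ C →
      G' (fun j => ((x j : ℝ))) = (g x : ℝ))
    (x : Fin n → ℝ) (hx : x ∈ C) (c : Fin k → ℝ) (hc : ∀ i, 0 ≤ c i) :
    G' x + ∑ i, c i * ((g (v i) : ℚ) : ℝ) ≤ G' (fun j => x j + ∑ i, c i * (v i j : ℝ)) := by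
  have memS : ∀ s : Finset (Fin k), (fun j => x j + ∑ i ∈ s, c i * (v i j : ℝ)) ∈ C := by
    intro s
    have := mem_combo v C hC x hx (fun i => if i ∈ s then c i else 0)
      (fun i => by (try dsimp only); split <;> [exact hc i; rfl])
    convert this using 2 with j
    congr 1
    rw [← Finset.sum_subset (Finset.subset_univ s) (fun i _ hi => by simp [hi])]
    exact Finset.sum_congr rfl fun i hi => by simp [hi]
  have main : ∀ s : Finset (Fin k),
      G' x + ∑ i ∈ s, c i * ((g (v i) : ℚ) : ℝ)
        ≤ G' (fun j => x j + ∑ i ∈ s, c i * (v i j : ℝ)) := by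
    intro s
    induction s using Finset.induction_on with
    | empty => simp
    | @insert a s ha ih =>
      have hmem1 := memS s
      have hmem2 := mem_gen v C hC a
      have hkey := hG1 _ hmem1 _ hmem2 1 (c a) zero_le_one (hc a)
      rw [hG2 (v a) hmem2] at hkey
      have heq : (1 : ℝ) • (fun j => x j + ∑ i ∈ s, c i * (v i j : ℝ))
          + c a • (fun j => ((v a j : ℝ)))
          = fun j => x j + ∑ i ∈ insert a s, c i * (v i j : ℝ) := by
        funext j
        simp only [Pi.add_apply, Pi.smul_apply, smul_eq_mul, Finset.sum_insert ha, one_mul]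
        ring
      rw [heq, one_mul] at hkey
      rw [Finset.sum_insert ha]
      linarith
  exact main Finset.univ

end SuperExt

namespace SuperExt

/-- Key lemma: superadditivity of `g` across *real* nonnegative cone coefficients,
proved via density of rational solutions of rational linear systems. -/
theorem key_ineq {n k : ℕ} (v : Fin k → Fin n → ℚ) (C : Set (Fin n → ℝ))
    (hC : C = {x | ∃ c : Fin k → ℝ, (∀ i, 0 ≤ c i) ∧
      x = ∑ i, c i • fun j => ((v i j : ℝ))})
    (g : (Fin n → ℚ) → ℚ)
    (hsuper : ∀ x y : Fin n → ℚ,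
      (fun j => ((x j : ℝ))) ∈ C → (fun j => ((y j : ℝ))) ∈ C →
      g x + g y ≤ g (x + y))
    (hhom : ∀ x : Fin n → ℚ, (fun j => ((x j : ℝ))) ∈ C →
      ∀ l : ℚ, 0 ≤ l → g (l • x) = l * g x)
    (q q' : Fin n → ℚ) (hq : (fun j => ((q j : ℝ))) ∈ C) (hq' : (fun j => ((q' j : ℝ))) ∈ C)
    (h : Fin k → ℝ) (hh : ∀ i, 0 ≤ h i)
    (heq : ∀ j, (q' j : ℝ) = (q j : ℝ) + ∑ i, h i * (v i j : ℝ)) :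
    (g q : ℝ) + ∑ i, h i * ((g (v i) : ℚ) : ℝ) ≤ (g q' : ℝ) := by
  refine le_of_forall_pos_le_add fun ε hε => ?_
  set B : ℝ := (∑ i, |((g (v i) : ℚ) : ℝ)|) + 1 with hBdef
  have hB : 0 < B := by positivity
  -- the masked system
  classical
  set vb : Fin k → Fin n → ℚ := fun i => if h i = 0 then 0 else v i with hvbdef
  set w : Fin n → ℚ := fun j => q' j - q j with hwdef
  have hwreal : ∀ j, (w j : ℝ) = ∑ i, h i * (vb i j : ℝ) := by
    intro j
    have : (w j : ℝ) = ∑ i, h i * (v i j : ℝ) := by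
      rw [hwdef]; push_cast; linarith [heq j]
    rw [this]
    refine Finset.sum_congr rfl fun i _ => ?_
    by_cases hi : h i = 0
    · simp [hvbdef, hi]
    · simp [hvbdef, hi]
  -- a positive tolerance below all positive h i
  by_cases hall : ∀ i, h i = 0
  · have hqq : q' = q := by
      funext j
      have := heq j
      simp only [hall, zero_mul, Finset.sum_const_zero, add_zero] at this
      exact_mod_cast this
    rw [hqq]
    have : ∑ i, h i * ((g (v i) : ℚ) : ℝ) = 0 := by
      refine Finset.sum_eq_zero fun i _ => by rw [hall i, zero_mul]
    rw [this]
    linarith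
  · push_neg at hall
    obtain ⟨i₁, hi₁⟩ := hall
    set F : Finset (Fin k) := Finset.univ.filter (fun i => h i ≠ 0) with hFdef
    have hFne : F.Nonempty := ⟨i₁, by simp [hFdef, hi₁]⟩
    set m : ℝ := F.inf' hFne h with hmdef
    have hmpos : 0 < m := by
      rw [hmdef, Finset.lt_inf'_iff]
      intro i hi
      have : h i ≠ 0 := by simpa [hFdef] using hi
      exact lt_of_le_of_ne (hh i) (Ne.symm this)
    set ε₀ : ℝ := min (ε / B) m with hε₀def
    have hε₀ : 0 < ε₀ := lt_min (by positivity) hmpos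
    obtain ⟨d', hd'eq, hd'close⟩ := aux_density k n vb w h hwreal ε₀ hε₀
    set d : Fin k → ℚ := fun i => if h i = 0 then 0 else d' i with hddef
    have hd0 : ∀ i, 0 ≤ d i := by
      intro i
      by_cases hi : h i = 0
      · simp [hddef, hi]
      · have hiF : i ∈ F := by simp [hFdef, hi]
        have h1 : m ≤ h i := Finset.inf'_le _ hiF
        have h2 : |h i - (d' i : ℝ)| < ε₀ := hd'close i
        have h3 : ε₀ ≤ m := min_le_right _ _
        have : (0 : ℝ) ≤ (d' i : ℝ) := by
          have := abs_lt.mp h2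
          linarith [this.2]
        have : (0 : ℚ) ≤ d' i := by exact_mod_cast this
        simp [hddef, hi, this]
    have hdeq : ∀ j, w j = ∑ i, d i * v i j := by
      intro j
      rw [hd'eq j]
      refine Finset.sum_congr rfl fun i _ => ?_
      by_cases hi : h i = 0
      · simp [hddef, hvbdef, hi]
      · simp [hddef, hvbdef, hi]
    have hdclose : ∀ i, |h i - (d i : ℝ)| ≤ ε₀ := by
      intro i
      by_cases hi : h i = 0
      · simp [hddef, hi, hε₀.le]
      · simpa [hddef, hi] using (hd'close i).le
    -- apply gsum
    have hgs := gsum v C hC g hsuper hhom q hq d hd0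
    have hq'eq : (fun j => q j + ∑ i, d i * v i j) = q' := by
      funext j
      rw [← hdeq j, hwdef]
      ring
    rw [hq'eq] at hgs
    have hcast : (g q : ℝ) + ∑ i, (d i : ℝ) * ((g (v i) : ℚ) : ℝ) ≤ (g q' : ℝ) := by
      exact_mod_cast hgs
    have hdiff : ∑ i, h i * ((g (v i) : ℚ) : ℝ) - ∑ i, (d i : ℝ) * ((g (v i) : ℚ) : ℝ) ≤ ε := by
      rw [← Finset.sum_sub_distrib]
      calc ∑ i, (h i * ((g (v i) : ℚ) : ℝ) - (d i : ℝ) * ((g (v i) : ℚ) : ℝ))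
          ≤ ∑ i, ε₀ * |((g (v i) : ℚ) : ℝ)| := by
            refine Finset.sum_le_sum fun i _ => ?_
            rw [← sub_mul]
            calc (h i - (d i : ℝ)) * ((g (v i) : ℚ) : ℝ)
                ≤ |(h i - (d i : ℝ)) * ((g (v i) : ℚ) : ℝ)| := le_abs_self _
              _ = |h i - (d i : ℝ)| * |((g (v i) : ℚ) : ℝ)| := abs_mul _ _
              _ ≤ ε₀ * |((g (v i) : ℚ) : ℝ)| :=
                  mul_le_mul_of_nonneg_right (hdclose i) (abs_nonneg _)
        _ = ε₀ * ∑ i, |((g (v i) : ℚ) : ℝ)| := by rw [Finset.mul_sum]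
        _ ≤ (ε / B) * ∑ i, |((g (v i) : ℚ) : ℝ)| := by
            refine mul_le_mul_of_nonneg_right (min_le_left _ _) ?_
            positivity
        _ ≤ (ε / B) * B := by
            refine mul_le_mul_of_nonneg_left ?_ (by positivity)
            rw [hBdef]; linarith
        _ = ε := by field_simp
    linarith

end SuperExt

namespace SuperExt

theorem mem_ratfun {n k : ℕ} (v : Fin k → Fin n → ℚ) (C : Set (Fin n → ℝ))
    (hC : C = {x | ∃ c : Fin k → ℝ, (∀ i, 0 ≤ c i) ∧
      x = ∑ i, c i • fun j => ((v i j : ℝ))})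
    (r : Fin k → ℚ) (hr : ∀ i, 0 ≤ r i) (p : Fin n → ℚ)
    (hp : ∀ j, p j = ∑ i, r i * v i j) :
    (fun j => ((p j : ℝ))) ∈ C := by
  rw [mem_iff v C hC]
  refine ⟨fun i => ((r i : ℝ)), fun i => ?_, fun j => ?_⟩
  · dsimp only; exact_mod_cast hr i
  · dsimp only; rw [hp j]; push_cast; rfl

theorem S_nonempty {n k : ℕ} (v : Fin k → Fin n → ℚ) (C : Set (Fin n → ℝ))
    (hC : C = {x | ∃ c : Fin k → ℝ, (∀ i, 0 ≤ c i) ∧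
      x = ∑ i, c i • fun j => ((v i j : ℝ))})
    (g : (Fin n → ℚ) → ℚ)
    (hhom : ∀ x : Fin n → ℚ, (fun j => ((x j : ℝ))) ∈ C →
      ∀ l : ℚ, 0 ≤ l → g (l • x) = l * g x)
    (x : Fin n → ℝ) (hx : x ∈ C) : (Sset v C g x).Nonempty := by
  obtain ⟨c, hc, hxc⟩ := (mem_iff v C hC x).mp hx
  refine ⟨∑ i, c i * ((g (v i) : ℚ) : ℝ), 0, c, mem_zero v C hC, hc, fun j => ?_, ?_⟩
  · simpa using hxc j
  · rw [g_zero v C hC g hhom]; simp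

theorem T_exists {n k : ℕ} (v : Fin k → Fin n → ℚ) (C : Set (Fin n → ℝ))
    (hC : C = {x | ∃ c : Fin k → ℝ, (∀ i, 0 ≤ c i) ∧
      x = ∑ i, c i • fun j => ((v i j : ℝ))})
    (x : Fin n → ℝ) (hx : x ∈ C) :
    ∃ (q' : Fin n → ℚ) (t : Fin k → ℝ), (fun j => ((q' j : ℝ))) ∈ C ∧ (∀ i, 0 ≤ t i) ∧
      (∀ j, (q' j : ℝ) = x j + ∑ i, t i * (v i j : ℝ)) := by
  obtain ⟨c, hc, hxc⟩ := (mem_iff v C hC x).mp hx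
  have hs : ∀ i, ∃ s : ℚ, c i < (s : ℝ) := fun i => exists_rat_gt (c i)
  choose s hsgt using hs
  have hs0 : ∀ i, 0 ≤ s i := by
    intro i
    have : (0 : ℝ) ≤ (s i : ℝ) := le_of_lt (lt_of_le_of_lt (hc i) (hsgt i))
    exact_mod_cast this
  refine ⟨fun j => ∑ i, s i * v i j, fun i => (s i : ℝ) - c i,
    mem_ratfun v C hC s hs0 _ (fun j => rfl), fun i => by dsimp only; linarith [hsgt i],
    fun j => ?_⟩
  rw [hxc j]
  push_cast
  rw [← Finset.sum_add_distrib]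
  exact Finset.sum_congr rfl fun i _ => by ring

theorem S_le_T {n k : ℕ} (v : Fin k → Fin n → ℚ) (C : Set (Fin n → ℝ))
    (hC : C = {x | ∃ c : Fin k → ℝ, (∀ i, 0 ≤ c i) ∧
      x = ∑ i, c i • fun j => ((v i j : ℝ))})
    (g : (Fin n → ℚ) → ℚ)
    (hsuper : ∀ x y : Fin n → ℚ,
      (fun j => ((x j : ℝ))) ∈ C → (fun j => ((y j : ℝ))) ∈ C →
      g x + g y ≤ g (x + y))
    (hhom : ∀ x : Fin n → ℚ, (fun j => ((x j : ℝ))) ∈ C →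
      ∀ l : ℚ, 0 ≤ l → g (l • x) = l * g x)
    (x : Fin n → ℝ) (α : ℝ) (hα : α ∈ Sset v C g x)
    (q' : Fin n → ℚ) (t : Fin k → ℝ) (hq' : (fun j => ((q' j : ℝ))) ∈ C)
    (ht : ∀ i, 0 ≤ t i) (heq : ∀ j, (q' j : ℝ) = x j + ∑ i, t i * (v i j : ℝ)) :
    α ≤ (g q' : ℝ) - ∑ i, t i * ((g (v i) : ℚ) : ℝ) := by
  obtain ⟨q, c, hqC, hc, hxq, hαeq⟩ := hα
  have hkey := key_ineq v C hC g hsuper hhom q q' hqC hq' (fun i => c i + t i)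
    (fun i => add_nonneg (hc i) (ht i)) (fun j => by
      rw [heq j, hxq j, add_assoc]
      congr 1
      rw [← Finset.sum_add_distrib]
      exact (Finset.sum_congr rfl fun i _ => by ring))
  have hsplit : ∑ i, (c i + t i) * ((g (v i) : ℚ) : ℝ)
      = (∑ i, c i * ((g (v i) : ℚ) : ℝ)) + ∑ i, t i * ((g (v i) : ℚ) : ℝ) := by
    rw [← Finset.sum_add_distrib]
    exact Finset.sum_congr rfl fun i _ => by ring
  rw [hαeq]
  rw [hsplit] at hkey
  linarith

theorem S_bddAbove {n k : ℕ} (v : Fin k → Fin n → ℚ) (C : Set (Fin n → ℝ))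
    (hC : C = {x | ∃ c : Fin k → ℝ, (∀ i, 0 ≤ c i) ∧
      x = ∑ i, c i • fun j => ((v i j : ℝ))})
    (g : (Fin n → ℚ) → ℚ)
    (hsuper : ∀ x y : Fin n → ℚ,
      (fun j => ((x j : ℝ))) ∈ C → (fun j => ((y j : ℝ))) ∈ C →
      g x + g y ≤ g (x + y))
    (hhom : ∀ x : Fin n → ℚ, (fun j => ((x j : ℝ))) ∈ C →
      ∀ l : ℚ, 0 ≤ l → g (l • x) = l * g x)
    (x : Fin n → ℝ) (hx : x ∈ C) : BddAbove (Sset v C g x) := by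
  obtain ⟨q', t, hq'C, ht, heq⟩ := T_exists v C hC x hx
  exact ⟨(g q' : ℝ) - ∑ i, t i * ((g (v i) : ℚ) : ℝ),
    fun α hα => S_le_T v C hC g hsuper hhom x α hα q' t hq'C ht heq⟩

theorem G_ext {n k : ℕ} (v : Fin k → Fin n → ℚ) (C : Set (Fin n → ℝ))
    (hC : C = {x | ∃ c : Fin k → ℝ, (∀ i, 0 ≤ c i) ∧
      x = ∑ i, c i • fun j => ((v i j : ℝ))})
    (g : (Fin n → ℚ) → ℚ)
    (hsuper : ∀ x y : Fin n → ℚ,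
      (fun j => ((x j : ℝ))) ∈ C → (fun j => ((y j : ℝ))) ∈ C →
      g x + g y ≤ g (x + y))
    (hhom : ∀ x : Fin n → ℚ, (fun j => ((x j : ℝ))) ∈ C →
      ∀ l : ℚ, 0 ≤ l → g (l • x) = l * g x)
    (p : Fin n → ℚ) (hp : (fun j => ((p j : ℝ))) ∈ C) :
    sSup (Sset v C g (fun j => ((p j : ℝ)))) = (g p : ℝ) := by
  have hmem : (g p : ℝ) ∈ Sset v C g (fun j => ((p j : ℝ))) := by
    exact ⟨p, 0, hp, fun i => le_rfl, fun j => by simp, by simp⟩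
  apply le_antisymm
  · refine csSup_le ⟨_, hmem⟩ fun α hα => ?_
    have := S_le_T v C hC g hsuper hhom _ α hα p 0 hp (fun i => le_rfl)
      (fun j => by simp)
    simpa using this
  · exact le_csSup (S_bddAbove v C hC g hsuper hhom _ hp) hmem

end SuperExt

namespace SuperExt

set_option maxHeartbeats 1600000 in
theorem gap_lemma {n k : ℕ} (v : Fin k → Fin n → ℚ) (C : Set (Fin n → ℝ))
    (hC : C = {x | ∃ c : Fin k → ℝ, (∀ i, 0 ≤ c i) ∧
      x = ∑ i, c i • fun j => ((v i j : ℝ))})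
    (g : (Fin n → ℚ) → ℚ)
    (hsuper : ∀ x y : Fin n → ℚ,
      (fun j => ((x j : ℝ))) ∈ C → (fun j => ((y j : ℝ))) ∈ C →
      g x + g y ≤ g (x + y))
    (hhom : ∀ x : Fin n → ℚ, (fun j => ((x j : ℝ))) ∈ C →
      ∀ l : ℚ, 0 ≤ l → g (l • x) = l * g x)
    (x : Fin n → ℝ) (hx : x ∈ C) (ε : ℝ) (hε : 0 < ε) :
    ∃ α ∈ Sset v C g x, ∃ (q' : Fin n → ℚ) (t : Fin k → ℝ),
      (fun j => ((q' j : ℝ))) ∈ C ∧ (∀ i, 0 ≤ t i) ∧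
      (∀ j, (q' j : ℝ) = x j + ∑ i, t i * (v i j : ℝ)) ∧
      (g q' : ℝ) - ∑ i, t i * ((g (v i) : ℚ) : ℝ) ≤ α + ε := by
  obtain ⟨c, hc, hxc⟩ := (mem_iff v C hC x).mp hx
  have hbound : ∀ (a b u : ℝ), 0 ≤ a → a ≤ b → |a * u| ≤ b * |u| := fun a b u ha hab => by
    rw [abs_mul, abs_of_nonneg ha]
    exact mul_le_mul_of_nonneg_right hab (abs_nonneg u)
  set A : ℝ := ∑ i, c i * |((g (v i) : ℚ) : ℝ)| with hAdef
  have hA : 0 ≤ A := Finset.sum_nonneg fun i _ => mul_nonneg (hc i) (abs_nonneg _)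
  choose s₂ hs₂ using fun i => exists_rat_gt (c i + 1)
  have hs₂0 : ∀ i, 0 ≤ s₂ i := by
    intro i
    have : (0 : ℝ) ≤ (s₂ i : ℝ) := by linarith [hs₂ i, hc i]
    exact_mod_cast this
  set Q₂ : Fin n → ℚ := fun j => ∑ i, s₂ i * v i j with hQ₂def
  set B₂ : ℝ := ((g Q₂ : ℚ) : ℝ) + ∑ i, (s₂ i : ℝ) * |((g (v i) : ℚ) : ℝ)| with hB₂def
  set K : ℝ := 3 * (A + B₂) + 2 * A with hKdef
  obtain ⟨δ, hδ1, hδ2⟩ := exists_rat_btwn (show (0 : ℝ) < min (1/3) (ε / (|K| + 1)) by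
    apply lt_min <;> positivity)
  have hδpos : (0 : ℝ) < (δ : ℝ) := hδ1
  have hδQ : 0 < δ := by exact_mod_cast hδpos
  have hδ13 : (δ : ℝ) ≤ 1/3 := le_of_lt (lt_of_lt_of_le hδ2 (min_le_left _ _))
  have hδε : (δ : ℝ) < ε / (|K| + 1) := lt_of_lt_of_le hδ2 (min_le_right _ _)
  -- per-coordinate rational sandwich
  have hsel : ∀ i, ∃ rs : ℚ × ℚ, 0 ≤ rs.1 ∧ ((rs.1 : ℝ) ≤ c i) ∧ (c i ≤ (rs.2 : ℝ)) ∧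
      ((rs.2 : ℝ) - (rs.1 : ℝ) ≤ 2 * (δ : ℝ) * c i) ∧ (rs.2 - rs.1 ≤ 3 * δ * rs.1) := by
    intro i
    rcases eq_or_lt_of_le (hc i) with h0 | hpos
    · exact ⟨(0, 0), le_rfl, by rw [← h0]; norm_num, by rw [← h0]; norm_num,
        by rw [← h0]; norm_num, by norm_num⟩
    · obtain ⟨r, hr1, hr2⟩ := exists_rat_btwn (show (1 - (δ : ℝ)) * c i < c i by nlinarith)
      obtain ⟨s, hs1, hs2⟩ := exists_rat_btwn (show c i < (1 + (δ : ℝ)) * c i by nlinarith)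
      have hr0R : (0 : ℝ) < (r : ℝ) := by nlinarith
      have hsr3 : (s : ℝ) - (r : ℝ) ≤ 3 * (δ : ℝ) * (r : ℝ) := by nlinarith
      exact ⟨(r, s), by exact_mod_cast hr0R.le, hr2.le, hs1.le, by nlinarith,
        by exact_mod_cast hsr3⟩
  choose rs hrs using hsel
  set r : Fin k → ℚ := fun i => (rs i).1 with hrdef
  set s : Fin k → ℚ := fun i => (rs i).2 with hsdef
  have hr0 : ∀ i, 0 ≤ r i := fun i => (hrs i).1
  have hrc : ∀ i, ((r i : ℝ)) ≤ c i := fun i => (hrs i).2.1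
  have hcs : ∀ i, c i ≤ ((s i : ℝ)) := fun i => (hrs i).2.2.1
  have h2d : ∀ i, ((s i : ℝ)) - (r i : ℝ) ≤ 2 * (δ : ℝ) * c i := fun i => (hrs i).2.2.2.1
  have h3d : ∀ i, s i - r i ≤ 3 * δ * r i := fun i => (hrs i).2.2.2.2
  have hs0 : ∀ i, 0 ≤ s i := by
    intro i
    have : (0 : ℝ) ≤ (s i : ℝ) := le_trans (hc i) (hcs i)
    exact_mod_cast this
  have hrsQ : ∀ i, r i ≤ s i := by
    intro i
    have : ((r i : ℝ)) ≤ ((s i : ℝ)) := le_trans (hrc i) (hcs i)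
    exact_mod_cast this
  set κ : ℚ := 3 * δ with hκdef
  have hκ : 0 < κ := by positivity
  have hκ1 : (0 : ℚ) < 1 + κ := by positivity
  set e : Fin k → ℚ := fun i => r i - (s i - r i) / κ with hedef
  have he0 : ∀ i, 0 ≤ e i := by
    intro i
    have h1 : (s i - r i) / κ ≤ r i := (div_le_iff₀ hκ).mpr (by nlinarith [h3d i])
    simp only [hedef]
    linarith
  have her : ∀ i, e i ≤ r i := by
    intro i
    have h1 : 0 ≤ (s i - r i) / κ := div_nonneg (by linarith [hrsQ i]) hκ.le
    simp only [hedef]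
    linarith
  set w : Fin n → ℚ := fun j => ∑ i, r i * v i j with hwdef
  set w' : Fin n → ℚ := fun j => ∑ i, s i * v i j with hw'def
  set z : Fin n → ℚ := fun j => ∑ i, e i * v i j with hzdef
  have hmw : (fun j => ((w j : ℝ))) ∈ C := mem_ratfun v C hC r hr0 w (fun j => rfl)
  have hmw' : (fun j => ((w' j : ℝ))) ∈ C := mem_ratfun v C hC s hs0 w' (fun j => rfl)
  have hmz : (fun j => ((z j : ℝ))) ∈ C :=
    mem_ratfun v C hC e he0 z (fun j => rfl)
  -- concavity trick
  set W1 : Fin n → ℚ := (1/(1+κ)) • w' with hW1def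
  set W2 : Fin n → ℚ := (κ/(1+κ)) • z with hW2def
  have hmW1 : (fun j => ((W1 j : ℝ))) ∈ C := by
    refine mem_ratfun v C hC (fun i => (1/(1+κ)) * s i)
      (fun i => mul_nonneg (by positivity) (hs0 i)) W1 (fun j => ?_)
    simp only [hW1def, Pi.smul_apply, smul_eq_mul, hw'def, Finset.mul_sum]
    exact Finset.sum_congr rfl fun i _ => by ring
  have hmW2 : (fun j => ((W2 j : ℝ))) ∈ C := by
    refine mem_ratfun v C hC (fun i => (κ/(1+κ)) * e i)
      (fun i => mul_nonneg (by positivity) (he0 i)) W2 (fun j => ?_)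
    simp only [hW2def, Pi.smul_apply, smul_eq_mul, hzdef, Finset.mul_sum]
    exact Finset.sum_congr rfl fun i _ => by ring
  have hsup := hsuper W1 W2 hmW1 hmW2
  have hW12 : W1 + W2 = w := by
    funext j
    simp only [hW1def, hW2def, Pi.add_apply, Pi.smul_apply, smul_eq_mul, hw'def, hzdef,
      hwdef, Finset.mul_sum]
    rw [← Finset.sum_add_distrib]
    refine Finset.sum_congr rfl fun i _ => ?_
    simp only [hedef]
    field_simp
    ring
  have hgW1 : g W1 = (1/(1+κ)) * g w' := hhom w' hmw' _ (by positivity)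
  have hgW2 : g W2 = (κ/(1+κ)) * g z := hhom z hmz _ (by positivity)
  rw [hW12, hgW1, hgW2] at hsup
  have h2 : ((g w' : ℚ) : ℝ) ≤ ((g w : ℚ) : ℝ) + ((κ : ℚ) : ℝ) * ((g w : ℚ) : ℝ)
      - ((κ : ℚ) : ℝ) * ((g z : ℚ) : ℝ) := by
    have hsupR : (1/(1+((κ : ℚ) : ℝ))) * ((g w' : ℚ) : ℝ)
        + (((κ : ℚ) : ℝ)/(1+((κ : ℚ) : ℝ))) * ((g z : ℚ) : ℝ) ≤ ((g w : ℚ) : ℝ) := by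
      exact_mod_cast hsup
    have hκR : (0 : ℝ) < 1 + ((κ : ℚ) : ℝ) := by positivity
    rw [div_mul_eq_mul_div, div_mul_eq_mul_div, ← add_div, div_le_iff₀ hκR] at hsupR
    nlinarith [hsupR]
  -- lower and upper bounds for g w, g z
  have hgw_low : ∑ i, ((r i : ℝ)) * ((g (v i) : ℚ) : ℝ) ≤ ((g w : ℚ) : ℝ) := by
    have h1 := gsum v C hC g hsuper hhom 0 (mem_zero v C hC) r hr0
    have hfun : (fun j => (0 : Fin n → ℚ) j + ∑ i, r i * v i j) = w := by
      funext j; simp [hwdef]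
    rw [hfun, g_zero v C hC g hhom, zero_add] at h1
    exact_mod_cast h1
  have hgz_low : ∑ i, ((e i : ℝ)) * ((g (v i) : ℚ) : ℝ) ≤ ((g z : ℚ) : ℝ) := by
    have h1 := gsum v C hC g hsuper hhom 0 (mem_zero v C hC) e he0
    have hfun : (fun j => (0 : Fin n → ℚ) j + ∑ i, e i * v i j) = z := by
      funext j; simp [hzdef]
    rw [hfun, g_zero v C hC g hhom, zero_add] at h1
    exact_mod_cast h1
  have hrA : |∑ i, ((r i : ℝ)) * ((g (v i) : ℚ) : ℝ)| ≤ A := by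
    refine le_trans (Finset.abs_sum_le_sum_abs _ _) ?_
    rw [hAdef]
    refine Finset.sum_le_sum fun i _ => hbound _ _ _ ?_ (hrc i)
    exact_mod_cast hr0 i
  have heA : |∑ i, ((e i : ℝ)) * ((g (v i) : ℚ) : ℝ)| ≤ A := by
    refine le_trans (Finset.abs_sum_le_sum_abs _ _) ?_
    rw [hAdef]
    refine Finset.sum_le_sum fun i _ => hbound _ _ _ ?_ ?_
    · exact_mod_cast he0 i
    · calc ((e i : ℝ)) ≤ ((r i : ℝ)) := by exact_mod_cast her i
        _ ≤ c i := hrc i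
  have hgw_up : ((g w : ℚ) : ℝ) ≤ B₂ := by
    have hs₂r : ∀ i, 0 ≤ s₂ i - r i := by
      intro i
      have : ((r i : ℝ)) ≤ ((s₂ i : ℝ)) := by linarith [hrc i, hs₂ i]
      have h' : r i ≤ s₂ i := by exact_mod_cast this
      linarith
    have h1 := gsum v C hC g hsuper hhom w hmw (fun i => s₂ i - r i) hs₂r
    have hfun : (fun j => w j + ∑ i, (s₂ i - r i) * v i j) = Q₂ := by
      funext j
      simp only [hwdef, hQ₂def, ← Finset.sum_add_distrib]
      exact Finset.sum_congr rfl fun i _ => by ring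
    rw [hfun] at h1
    have h1R : ((g w : ℚ) : ℝ) + ∑ i, (((s₂ i : ℝ)) - (r i : ℝ)) * ((g (v i) : ℚ) : ℝ)
        ≤ ((g Q₂ : ℚ) : ℝ) := by exact_mod_cast h1
    have habs2 : |∑ i, (((s₂ i : ℝ)) - (r i : ℝ)) * ((g (v i) : ℚ) : ℝ)|
        ≤ ∑ i, (s₂ i : ℝ) * |((g (v i) : ℚ) : ℝ)| := by
      refine le_trans (Finset.abs_sum_le_sum_abs _ _) ?_
      refine Finset.sum_le_sum fun i _ => hbound _ _ _ ?_ ?_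
      · have := hs₂r i
        have h' : ((r i : ℝ)) ≤ ((s₂ i : ℝ)) := by exact_mod_cast (by linarith : r i ≤ s₂ i)
        linarith
      · have : (0 : ℝ) ≤ ((r i : ℝ)) := by exact_mod_cast hr0 i
        linarith
    rw [hB₂def]
    have := neg_abs_le (∑ i, (((s₂ i : ℝ)) - (r i : ℝ)) * ((g (v i) : ℚ) : ℝ))
    linarith
  -- now produce the element and the data
  refine ⟨((g w : ℚ) : ℝ) + ∑ i, (c i - (r i : ℝ)) * ((g (v i) : ℚ) : ℝ),
    ⟨w, fun i => c i - (r i : ℝ), hmw, fun i => by dsimp only; linarith [hrc i],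
      fun j => ?_, rfl⟩,
    w', fun i => (s i : ℝ) - c i, hmw', fun i => by dsimp only; linarith [hcs i],
    fun j => ?_, ?_⟩
  · -- x j = w j + ∑ (c - r) v
    have hwj : ((w j : ℚ) : ℝ) = ∑ i, ((r i : ℝ)) * ((v i j : ℚ) : ℝ) := by
      simp only [hwdef]; push_cast; rfl
    rw [hxc j, hwj, ← Finset.sum_add_distrib]
    exact Finset.sum_congr rfl fun i _ => by ring
  · -- w' j = x j + ∑ (s - c) v
    have hwj : ((w' j : ℚ) : ℝ) = ∑ i, ((s i : ℝ)) * ((v i j : ℚ) : ℝ) := by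
      simp only [hw'def]; push_cast; rfl
    rw [hxc j, hwj, ← Finset.sum_add_distrib]
    exact Finset.sum_congr rfl fun i _ => by ring
  · -- the gap estimate
    have hsplit : ∑ i, (((s i : ℝ)) - (r i : ℝ)) * ((g (v i) : ℚ) : ℝ)
        = ∑ i, (((s i : ℝ)) - c i) * ((g (v i) : ℚ) : ℝ)
          + ∑ i, (c i - ((r i : ℝ))) * ((g (v i) : ℚ) : ℝ) := by
      rw [← Finset.sum_add_distrib]
      exact Finset.sum_congr rfl fun i _ => by ring
    have hgap0 : -(2 * ((δ : ℝ) * A)) ≤ ∑ i, (((s i : ℝ)) - (r i : ℝ)) * ((g (v i) : ℚ) : ℝ) := by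
      have habs3 : |∑ i, (((s i : ℝ)) - (r i : ℝ)) * ((g (v i) : ℚ) : ℝ)|
          ≤ ∑ i, (2 * (δ : ℝ) * c i) * |((g (v i) : ℚ) : ℝ)| := by
        refine le_trans (Finset.abs_sum_le_sum_abs _ _) ?_
        refine Finset.sum_le_sum fun i _ => hbound _ _ _ ?_ (h2d i)
        have : ((r i : ℝ)) ≤ (s i : ℝ) := by exact_mod_cast hrsQ i
        linarith
      have hsum2 : ∑ i, (2 * (δ : ℝ) * c i) * |((g (v i) : ℚ) : ℝ)| = 2 * ((δ : ℝ) * A) := by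
        rw [hAdef, Finset.mul_sum, Finset.mul_sum]
        exact Finset.sum_congr rfl fun i _ => by ring
      rw [hsum2] at habs3
      linarith [neg_abs_le (∑ i, (((s i : ℝ)) - (r i : ℝ)) * ((g (v i) : ℚ) : ℝ))]
    have hκR3 : ((κ : ℚ) : ℝ) = 3 * (δ : ℝ) := by rw [hκdef]; push_cast; ring
    have hKpos : (0 : ℝ) < |K| + 1 := by positivity
    have hδK : (δ : ℝ) * (|K| + 1) < ε := by
      rw [lt_div_iff₀ hKpos] at hδε
      exact hδε
    have hKK : (δ : ℝ) * K ≤ (δ : ℝ) * |K| :=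
      mul_le_mul_of_nonneg_left (le_abs_self K) hδpos.le
    have hKexp : (δ : ℝ) * K = 3 * ((δ : ℝ) * A) + 3 * ((δ : ℝ) * B₂) + 2 * ((δ : ℝ) * A) := by
      rw [hKdef]; ring
    have hprod1 : ((κ : ℚ) : ℝ) * ((g w : ℚ) : ℝ) ≤ 3 * ((δ : ℝ) * B₂) := by
      rw [hκR3]
      have := mul_le_mul_of_nonneg_left hgw_up (by positivity : (0:ℝ) ≤ 3 * (δ : ℝ))
      linarith [this]
    have hprod2 : -(3 * ((δ : ℝ) * A)) ≤ ((κ : ℚ) : ℝ) * ((g z : ℚ) : ℝ) := by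
      rw [hκR3]
      have hz1 : -A ≤ ((g z : ℚ) : ℝ) := by
        have := neg_abs_le (∑ i, ((e i : ℝ)) * ((g (v i) : ℚ) : ℝ))
        linarith [hgz_low, heA]
      have := mul_le_mul_of_nonneg_left hz1 (by positivity : (0:ℝ) ≤ 3 * (δ : ℝ))
      linarith [this]
    have hδApos : 0 ≤ (δ : ℝ) * A := mul_nonneg hδpos.le hA
    linarith [h2, hprod1, hprod2, hgap0, hsplit, hKexp, hKK, hδK, hδpos]

end SuperExt

namespace SuperExt

set_option maxHeartbeats 1600000 in
theorem G_superlinear {n k : ℕ} (v : Fin k → Fin n → ℚ) (C : Set (Fin n → ℝ))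
    (hC : C = {x | ∃ c : Fin k → ℝ, (∀ i, 0 ≤ c i) ∧
      x = ∑ i, c i • fun j => ((v i j : ℝ))})
    (g : (Fin n → ℚ) → ℚ)
    (hsuper : ∀ x y : Fin n → ℚ,
      (fun j => ((x j : ℝ))) ∈ C → (fun j => ((y j : ℝ))) ∈ C →
      g x + g y ≤ g (x + y))
    (hhom : ∀ x : Fin n → ℚ, (fun j => ((x j : ℝ))) ∈ C →
      ∀ l : ℚ, 0 ≤ l → g (l • x) = l * g x)
    (x : Fin n → ℝ) (hx : x ∈ C) (y : Fin n → ℝ) (hy : y ∈ C)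
    (a b : ℝ) (ha : 0 ≤ a) (hb : 0 ≤ b) :
    a * sSup (Sset v C g x) + b * sSup (Sset v C g y)
      ≤ sSup (Sset v C g (a • x + b • y)) := by
  set z : Fin n → ℝ := a • x + b • y with hzdef
  have hz : z ∈ C := by
    rw [mem_iff v C hC]
    obtain ⟨cx, hcx, hxc⟩ := (mem_iff v C hC x).mp hx
    obtain ⟨cy, hcy, hyc⟩ := (mem_iff v C hC y).mp hy
    refine ⟨fun i => a * cx i + b * cy i,
      fun i => add_nonneg (mul_nonneg ha (hcx i)) (mul_nonneg hb (hcy i)), fun j => ?_⟩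
    have hzj : z j = a * x j + b * y j := by
      simp [hzdef, Pi.add_apply, Pi.smul_apply, smul_eq_mul]
    rw [hzj, hxc j, hyc j, Finset.mul_sum, Finset.mul_sum, ← Finset.sum_add_distrib]
    exact Finset.sum_congr rfl fun i _ => by ring
  have hSz_bdd := S_bddAbove v C hC g hsuper hhom z hz
  have hSx_ne := S_nonempty v C hC g hhom x hx
  have hSy_ne := S_nonempty v C hC g hhom y hy
  -- the core inequality
  have core : ∀ α ∈ Sset v C g x, ∀ β ∈ Sset v C g y,
      a * α + b * β ≤ sSup (Sset v C g z) := by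
    intro α hα β hβ
    obtain ⟨q, cq, hqC, hcq, hxq, hαeq⟩ := hα
    obtain ⟨q', cq', hq'C, hcq', hyq, hβeq⟩ := hβ
    obtain ⟨f, hf, hqf0⟩ := (mem_iff v C hC _).mp hqC
    obtain ⟨f', hf', hq'f0⟩ := (mem_iff v C hC _).mp hq'C
    have hqf : ∀ j, ((q j : ℝ)) = ∑ i, f i * ((v i j : ℝ)) := fun j => hqf0 j
    have hq'f : ∀ j, ((q' j : ℝ)) = ∑ i, f' i * ((v i j : ℝ)) := fun j => hq'f0 j
    refine le_of_forall_pos_le_add fun ε hε => ?_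
    set Tf : ℝ := ∑ i, f i * |((g (v i) : ℚ) : ℝ)| with hTfdef
    set Tf' : ℝ := ∑ i, f' i * |((g (v i) : ℚ) : ℝ)| with hTf'def
    have hTf0 : 0 ≤ Tf := Finset.sum_nonneg fun i _ => mul_nonneg (hf i) (abs_nonneg _)
    have hTf'0 : 0 ≤ Tf' := Finset.sum_nonneg fun i _ => mul_nonneg (hf' i) (abs_nonneg _)
    set K₂ : ℝ := |((g q : ℚ) : ℝ)| + |((g q' : ℚ) : ℝ)| + Tf + Tf' + 1 with hK₂def
    have hK₂ : 0 < K₂ := by positivity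
    set δ : ℝ := ε / K₂ with hδdef
    have hδ : 0 < δ := by positivity
    have hsel : ∀ u : ℝ, 0 ≤ u → ∃ u' : ℚ, 0 ≤ u' ∧ (u' : ℝ) ≤ u ∧ u - δ ≤ (u' : ℝ) := by
      intro u hu
      rcases eq_or_lt_of_le hu with h0 | hpos
      · refine ⟨0, le_rfl, ?_, ?_⟩ <;> rw [← h0] <;> norm_num
        linarith
      · obtain ⟨u', h1, h2⟩ := exists_rat_btwn
          (show max 0 (u - δ) < u from max_lt_iff.mpr ⟨hpos, by linarith⟩)
        refine ⟨u', ?_, h2.le, ?_⟩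
        · have : (0:ℝ) ≤ (u' : ℝ) := le_of_lt (lt_of_le_of_lt (le_max_left _ _) h1)
          exact_mod_cast this
        · exact le_of_lt (lt_of_le_of_lt (le_max_right _ _) h1)
    obtain ⟨a', ha'0, ha'le, ha'ge⟩ := hsel a ha
    obtain ⟨b', hb'0, hb'le, hb'ge⟩ := hsel b hb
    set Q : Fin n → ℚ := a' • q + b' • q' with hQdef
    have hmQ : (fun j => ((Q j : ℝ))) ∈ C := by
      rw [mem_iff v C hC]
      refine ⟨fun i => (a' : ℝ) * f i + (b' : ℝ) * f' i,
        fun i => by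
          dsimp only
          have h1 : (0:ℝ) ≤ (a' : ℝ) := by exact_mod_cast ha'0
          have h2 : (0:ℝ) ≤ (b' : ℝ) := by exact_mod_cast hb'0
          exact add_nonneg (mul_nonneg h1 (hf i)) (mul_nonneg h2 (hf' i)),
        fun j => ?_⟩
      have hQj : ((Q j : ℝ)) = (a' : ℝ) * ((q j : ℝ)) + (b' : ℝ) * ((q' j : ℝ)) := by
        simp only [hQdef, Pi.add_apply, Pi.smul_apply, smul_eq_mul]
        push_cast
        ring
      rw [hQj, hqf j, hq'f j, Finset.mul_sum, Finset.mul_sum, ← Finset.sum_add_distrib]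
      exact Finset.sum_congr rfl fun i _ => by ring
    set ee : Fin k → ℝ := fun i =>
      (a - (a' : ℝ)) * f i + (b - (b' : ℝ)) * f' i + a * cq i + b * cq' i with heedef
    have hee0 : ∀ i, 0 ≤ ee i := by
      intro i
      simp only [heedef]
      have h1 := mul_nonneg (by linarith : (0:ℝ) ≤ a - (a' : ℝ)) (hf i)
      have h2 := mul_nonneg (by linarith : (0:ℝ) ≤ b - (b' : ℝ)) (hf' i)
      have h3 := mul_nonneg ha (hcq i)
      have h4 := mul_nonneg hb (hcq' i)
      linarith
    have hQj : ∀ j, ((Q j : ℝ)) = (a' : ℝ) * (∑ i, f i * ((v i j : ℝ)))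
        + (b' : ℝ) * (∑ i, f' i * ((v i j : ℝ))) := by
      intro j
      have : ((Q j : ℝ)) = (a' : ℝ) * ((q j : ℝ)) + (b' : ℝ) * ((q' j : ℝ)) := by
        simp only [hQdef, Pi.add_apply, Pi.smul_apply, smul_eq_mul]
        push_cast
        ring
      rw [this, hqf j, hq'f j]
    have heesplit : ∀ j, ∑ i, ee i * ((v i j : ℝ))
        = (a - (a' : ℝ)) * (∑ i, f i * ((v i j : ℝ)))
          + (b - (b' : ℝ)) * (∑ i, f' i * ((v i j : ℝ)))
          + a * (∑ i, cq i * ((v i j : ℝ))) + b * (∑ i, cq' i * ((v i j : ℝ))) := by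
      intro j
      rw [Finset.mul_sum, Finset.mul_sum, Finset.mul_sum, Finset.mul_sum,
        ← Finset.sum_add_distrib, ← Finset.sum_add_distrib, ← Finset.sum_add_distrib]
      refine Finset.sum_congr rfl fun i _ => ?_
      simp only [heedef]
      ring
    have hzeq : ∀ j, z j = ((Q j : ℝ)) + ∑ i, ee i * ((v i j : ℝ)) := by
      intro j
      have hzj : z j = a * x j + b * y j := by
        simp [hzdef, Pi.add_apply, Pi.smul_apply, smul_eq_mul]
      rw [hzj, hxq j, hyq j, hqf j, hq'f j, hQj j, heesplit j]
      ring
    have hγmem : ((g Q : ℚ) : ℝ) + ∑ i, ee i * ((g (v i) : ℚ) : ℝ) ∈ Sset v C g z :=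
      ⟨Q, ee, hmQ, hee0, hzeq, rfl⟩
    have hγle : ((g Q : ℚ) : ℝ) + ∑ i, ee i * ((g (v i) : ℚ) : ℝ)
        ≤ sSup (Sset v C g z) := le_csSup hSz_bdd hγmem
    -- lower bound for g Q
    have hmq1 : (fun j => (((a' • q) j : ℝ))) ∈ C := by
      rw [mem_iff v C hC]
      refine ⟨fun i => (a' : ℝ) * f i, fun i => by
        dsimp only
        have h1 : (0:ℝ) ≤ (a' : ℝ) := by exact_mod_cast ha'0
        exact mul_nonneg h1 (hf i), fun j => ?_⟩
      have : (((a' • q) j : ℚ) : ℝ) = (a' : ℝ) * ((q j : ℝ)) := by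
        simp only [Pi.smul_apply, smul_eq_mul]; push_cast; ring
      rw [this, hqf j, Finset.mul_sum]
      exact Finset.sum_congr rfl fun i _ => by ring
    have hmq2 : (fun j => (((b' • q') j : ℝ))) ∈ C := by
      rw [mem_iff v C hC]
      refine ⟨fun i => (b' : ℝ) * f' i, fun i => by
        dsimp only
        have h1 : (0:ℝ) ≤ (b' : ℝ) := by exact_mod_cast hb'0
        exact mul_nonneg h1 (hf' i), fun j => ?_⟩
      have : (((b' • q') j : ℚ) : ℝ) = (b' : ℝ) * ((q' j : ℝ)) := by
        simp only [Pi.smul_apply, smul_eq_mul]; push_cast; ring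
      rw [this, hq'f j, Finset.mul_sum]
      exact Finset.sum_congr rfl fun i _ => by ring
    have hsupQ := hsuper (a' • q) (b' • q') hmq1 hmq2
    rw [← hQdef] at hsupQ
    rw [hhom q hqC a' ha'0, hhom q' hq'C b' hb'0] at hsupQ
    have hgQlow : (a' : ℝ) * ((g q : ℚ) : ℝ) + (b' : ℝ) * ((g q' : ℚ) : ℝ)
        ≤ ((g Q : ℚ) : ℝ) := by exact_mod_cast hsupQ
    -- error bounds
    have hSfg : -Tf ≤ ∑ i, f i * ((g (v i) : ℚ) : ℝ) := by
      have h1 : |∑ i, f i * ((g (v i) : ℚ) : ℝ)| ≤ Tf := by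
        refine le_trans (Finset.abs_sum_le_sum_abs _ _) ?_
        rw [hTfdef]
        refine Finset.sum_le_sum fun i _ => ?_
        rw [abs_mul, abs_of_nonneg (hf i)]
      linarith [neg_abs_le (∑ i, f i * ((g (v i) : ℚ) : ℝ))]
    have hSf'g : -Tf' ≤ ∑ i, f' i * ((g (v i) : ℚ) : ℝ) := by
      have h1 : |∑ i, f' i * ((g (v i) : ℚ) : ℝ)| ≤ Tf' := by
        refine le_trans (Finset.abs_sum_le_sum_abs _ _) ?_
        rw [hTf'def]
        refine Finset.sum_le_sum fun i _ => ?_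
        rw [abs_mul, abs_of_nonneg (hf' i)]
      linarith [neg_abs_le (∑ i, f' i * ((g (v i) : ℚ) : ℝ))]
    have heegsplit : ∑ i, ee i * ((g (v i) : ℚ) : ℝ)
        = (a - (a' : ℝ)) * (∑ i, f i * ((g (v i) : ℚ) : ℝ))
          + (b - (b' : ℝ)) * (∑ i, f' i * ((g (v i) : ℚ) : ℝ))
          + a * (∑ i, cq i * ((g (v i) : ℚ) : ℝ)) + b * (∑ i, cq' i * ((g (v i) : ℚ) : ℝ)) := by
      rw [Finset.mul_sum, Finset.mul_sum, Finset.mul_sum, Finset.mul_sum,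
        ← Finset.sum_add_distrib, ← Finset.sum_add_distrib, ← Finset.sum_add_distrib]
      refine Finset.sum_congr rfl fun i _ => ?_
      simp only [heedef]
      ring
    have E1 : (a - (a' : ℝ)) * ((g q : ℚ) : ℝ) ≤ δ * |((g q : ℚ) : ℝ)| :=
      le_trans (mul_le_mul_of_nonneg_left (le_abs_self _) (by linarith))
        (mul_le_mul_of_nonneg_right (by linarith) (abs_nonneg _))
    have E2 : (b - (b' : ℝ)) * ((g q' : ℚ) : ℝ) ≤ δ * |((g q' : ℚ) : ℝ)| :=
      le_trans (mul_le_mul_of_nonneg_left (le_abs_self _) (by linarith))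
        (mul_le_mul_of_nonneg_right (by linarith) (abs_nonneg _))
    have E3 : (a - (a' : ℝ)) * (-Tf) ≤ (a - (a' : ℝ)) * (∑ i, f i * ((g (v i) : ℚ) : ℝ)) :=
      mul_le_mul_of_nonneg_left hSfg (by linarith)
    have E3' : (a - (a' : ℝ)) * Tf ≤ δ * Tf :=
      mul_le_mul_of_nonneg_right (by linarith) hTf0
    have E4 : (b - (b' : ℝ)) * (-Tf') ≤ (b - (b' : ℝ)) * (∑ i, f' i * ((g (v i) : ℚ) : ℝ)) :=
      mul_le_mul_of_nonneg_left hSf'g (by linarith)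
    have E4' : (b - (b' : ℝ)) * Tf' ≤ δ * Tf' :=
      mul_le_mul_of_nonneg_right (by linarith) hTf'0
    have hδK : δ * K₂ = ε := by
      rw [hδdef]
      field_simp
    have hK₂exp : δ * K₂ = δ * |((g q : ℚ) : ℝ)| + δ * |((g q' : ℚ) : ℝ)|
        + δ * Tf + δ * Tf' + δ := by
      rw [hK₂def]; ring
    rw [hαeq, hβeq]
    nlinarith [hγle, hgQlow, heegsplit, E1, E2, E3, E3', E4, E4', hδ.le, hδK, hK₂exp]
  -- conclude by taking sups
  have h1 : ∀ β ∈ Sset v C g y, a * sSup (Sset v C g x) + b * β ≤ sSup (Sset v C g z) := by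
    intro β hβ
    obtain ⟨α₀, hα₀⟩ := hSx_ne
    rcases eq_or_lt_of_le ha with h0 | hapos
    · have := core α₀ hα₀ β hβ
      rw [← h0] at this ⊢
      simpa using this
    · have hle : sSup (Sset v C g x) ≤ (sSup (Sset v C g z) - b * β) / a :=
        csSup_le ⟨α₀, hα₀⟩ fun α hα =>
          (le_div_iff₀ hapos).mpr (by linarith [core α hα β hβ])
      have h2 := mul_le_mul_of_nonneg_left hle hapos.le
      rw [mul_div_cancel₀ _ (ne_of_gt hapos)] at h2
      linarith
  obtain ⟨β₀, hβ₀⟩ := hSy_ne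
  rcases eq_or_lt_of_le hb with h0 | hbpos
  · have := h1 β₀ hβ₀
    rw [← h0] at this ⊢
    simpa using this
  · have hle : sSup (Sset v C g y) ≤ (sSup (Sset v C g z) - a * sSup (Sset v C g x)) / b :=
      csSup_le ⟨β₀, hβ₀⟩ fun β hβ =>
        (le_div_iff₀ hbpos).mpr (by linarith [h1 β hβ])
    have h2 := mul_le_mul_of_nonneg_left hle hbpos.le
    rw [mul_div_cancel₀ _ (ne_of_gt hbpos)] at h2
    linarith

end SuperExt

/-- **Superadditive positively homogeneous functions on rational points of a rational
polyhedral cone extend uniquely to superlinear functions on the cone.**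
Let `C ⊆ ℝⁿ` be a rational polyhedral cone (generated by the rational vectors `v i`), and
let `g : C ∩ ℚⁿ → ℚ` be superadditive with `g (λ • x) = λ * g x` for rational `λ ≥ 0`.
Then `g` extends in a unique way to a superlinear function `G : C → ℝ`. -/
theorem superadditive_rational_extends_to_superlinear
    (n k : ℕ) (v : Fin k → Fin n → ℚ)
    (C : Set (Fin n → ℝ))
    (hC : C = {x | ∃ c : Fin k → ℝ, (∀ i, 0 ≤ c i) ∧
      x = ∑ i, c i • fun j => ((v i j : ℝ))})
    (g : (Fin n → ℚ) → ℚ)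
    (hsuper : ∀ x y : Fin n → ℚ,
      (fun j => ((x j : ℝ))) ∈ C → (fun j => ((y j : ℝ))) ∈ C →
      g x + g y ≤ g (x + y))
    (hhom : ∀ x : Fin n → ℚ, (fun j => ((x j : ℝ))) ∈ C →
      ∀ l : ℚ, 0 ≤ l → g (l • x) = l * g x) :
    ∃ G : (Fin n → ℝ) → ℝ,
      ((∀ x ∈ C, ∀ y ∈ C, ∀ a b : ℝ, 0 ≤ a → 0 ≤ b →
          a * G x + b * G y ≤ G (a • x + b • y)) ∧
        (∀ x : Fin n → ℚ, (fun j => ((x j : ℝ))) ∈ C →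
          G (fun j => ((x j : ℝ))) = (g x : ℝ))) ∧
      ∀ G' : (Fin n → ℝ) → ℝ,
        ((∀ x ∈ C, ∀ y ∈ C, ∀ a b : ℝ, 0 ≤ a → 0 ≤ b →
            a * G' x + b * G' y ≤ G' (a • x + b • y)) ∧
          (∀ x : Fin n → ℚ, (fun j => ((x j : ℝ))) ∈ C →
            G' (fun j => ((x j : ℝ))) = (g x : ℝ))) →
        ∀ x ∈ C, G' x = G x := by
  classical
  refine ⟨fun x => sSup (SuperExt.Sset v C g x),
    ⟨fun x hx y hy a b ha hb =>
        SuperExt.G_superlinear v C hC g hsuper hhom x hx y hy a b ha hb,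
      fun p hp => SuperExt.G_ext v C hC g hsuper hhom p hp⟩,
    ?_⟩
  rintro G' ⟨hG1, hG2⟩ x hx
  have le1 : sSup (SuperExt.Sset v C g x) ≤ G' x := by
    refine csSup_le (SuperExt.S_nonempty v C hC g hhom x hx) fun α hα => ?_
    obtain ⟨q, c, hqC, hc, hxq, hαeq⟩ := hα
    have hGs := SuperExt.Gsum v C hC g G' hG1 hG2 (fun j => ((q j : ℝ))) hqC c hc
    have h3 : x = (fun j => (fun j' => ((q j' : ℝ))) j + ∑ i, c i * ((v i j : ℝ))) :=
      funext fun j => hxq j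
    rw [hαeq, ← hG2 q hqC]
    calc G' (fun j => ((q j : ℝ))) + ∑ i, c i * ((g (v i) : ℚ) : ℝ)
        ≤ G' (fun j => (fun j' => ((q j' : ℝ))) j + ∑ i, c i * ((v i j : ℝ))) := hGs
      _ = G' x := (congrArg G' h3).symm
  have le2 : G' x ≤ sSup (SuperExt.Sset v C g x) := by
    refine le_of_forall_pos_le_add fun ε hε => ?_
    obtain ⟨α, hα, q', t, hq'C, ht, heq, hgap⟩ :=
      SuperExt.gap_lemma v C hC g hsuper hhom x hx ε hε
    have hGs := SuperExt.Gsum v C hC g G' hG1 hG2 x hx t ht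
    have h4 : (fun j => x j + ∑ i, t i * ((v i j : ℝ))) = (fun j => ((q' j : ℝ))) :=
      funext fun j => (heq j).symm
    rw [h4, hG2 q' hq'C] at hGs
    have hαS : α ≤ sSup (SuperExt.Sset v C g x) :=
      le_csSup (SuperExt.S_bddAbove v C hC g hsuper hhom x hx) hα
    linarith
  exact le_antisymm le2 le1
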